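/- arXiv:1706.00033 — 8 statements merged into one kernel-verified Lean document; each statement's English description precedes it below -/
import Mathlib

section
/- Let α be a monotone self-map of {0,...,n-1} with image in A = {a_0 < ... < a_{k-1}}, with block lengths (i_0,...,i_{k-1}) summing to n, and fix 0 ≤ ℓ < m ≤ k−1. Define the projection ∂(α) to be the step function taking value a_ℓ on the first Σ_{p=0}^{ℓ} i_p points, value a_s on i_s points for ℓ < s < m, and value a_m on the last Σ_{p=m}^{k-1} i_p points. Then ∂ is additive: ∂(α + β) = ∂(α) + ∂(β) for all such α, β, where + is pointwise maximum. -/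
/-- `IsStep n k a i α` : `α t = a s` whenever `∑_{p<s} i p ≤ t < ∑_{p≤s} i p`, for `s < k`. -/
def IsStep (n k : ℕ) (a : ℕ → Fin n) (i : ℕ → ℕ) (α : Fin n → Fin n) : Prop :=
  ∀ s < k, ∀ t : Fin n,
    ∑ p ∈ Finset.range s, i p ≤ t.val → t.val < ∑ p ∈ Finset.range (s + 1), i p → α t = a s

/-- Block lengths of the projection onto `σ{a_ℓ,…,a_m}`: the first `ℓ+1` blocks are merged
into a single `a_ℓ`-block of length `∑_{p=0}^{ℓ} i p`, middle blocks are kept, and the last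
`k-m` blocks are merged into an `a_m`-block of length `∑_{p=m}^{k-1} i p`. -/
def mergedLen (i : ℕ → ℕ) (l m k : ℕ) : ℕ → ℕ := fun s =>
  if s = 0 then ∑ p ∈ Finset.range (l + 1), i p
  else if s < m - l then i (l + s)
  else if s = m - l then ∑ p ∈ Finset.Ico m k, i p
  else 0

lemma sum_range_mono (i : ℕ → ℕ) {u v : ℕ} (h : u ≤ v) :
    ∑ p ∈ Finset.range u, i p ≤ ∑ p ∈ Finset.range v, i p :=
  Finset.sum_le_sum_of_subset (Finset.range_subset_range.mpr h)

lemma exists_block (n k : ℕ) (i : ℕ → ℕ) (hi : ∑ p ∈ Finset.range k, i p = n)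
    (t : Fin n) : ∃ s, s < k ∧ ∑ p ∈ Finset.range s, i p ≤ t.val ∧
      t.val < ∑ p ∈ Finset.range (s + 1), i p := by
  have hkpos : 0 < k := by
    by_contra h
    have : k = 0 := by omega
    subst this
    simp at hi
    exact absurd t.2 (by omega)
  have hex : ∃ s, t.val < ∑ p ∈ Finset.range (s + 1), i p :=
    ⟨k - 1, by rw [Nat.sub_add_cancel hkpos, hi]; exact t.2⟩
  refine ⟨Nat.find hex, ?_, ?_, Nat.find_spec hex⟩
  · have : Nat.find hex ≤ k - 1 :=
      Nat.find_le (by rw [Nat.sub_add_cancel hkpos, hi]; exact t.2)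
    omega
  · rcases Nat.eq_zero_or_pos (Nat.find hex) with h | h
    · simp [h]
    · have := Nat.find_min hex (show Nat.find hex - 1 < Nat.find hex by omega)
      have heq : Nat.find hex - 1 + 1 = Nat.find hex := by omega
      rw [heq] at this
      omega

lemma merged_sum (i : ℕ → ℕ) (l m k : ℕ) {u : ℕ} (hu : 1 ≤ u) (hu2 : u ≤ m - l) :
    ∑ p ∈ Finset.range u, mergedLen i l m k p = ∑ p ∈ Finset.range (l + u), i p := by
  induction u with
  | zero => omega
  | succ v ih =>
    rcases Nat.eq_zero_or_pos v with h | h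
    · subst h
      simp [mergedLen]
    · rw [Finset.sum_range_succ, ih h (by omega)]
      have hv : mergedLen i l m k v = i (l + v) := by
        simp only [mergedLen]
        rw [if_neg (by omega), if_pos (by omega)]
      rw [hv, ← Finset.sum_range_succ, Nat.add_assoc]

lemma merged_sum_total (i : ℕ → ℕ) (l m k : ℕ) (hlm : l < m) (hmk : m ≤ k) :
    ∑ p ∈ Finset.range (m - l + 1), mergedLen i l m k p = ∑ p ∈ Finset.range k, i p := by
  rw [Finset.sum_range_succ, merged_sum i l m k (by omega) (le_refl _)]
  have h1 : mergedLen i l m k (m - l) = ∑ p ∈ Finset.Ico m k, i p := by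
    simp only [mergedLen]
    rw [if_neg (by omega), if_neg (by omega)]
    simp
  have h2 : l + (m - l) = m := by omega
  rw [h1, h2, Finset.sum_range_add_sum_Ico _ hmk]

lemma proj_val (n k l m : ℕ) (hlm : l < m) (hmk : m < k)
    (a : ℕ → Fin n) (i : ℕ → ℕ) (hi : ∑ p ∈ Finset.range k, i p = n)
    (D : Fin n → Fin n)
    (hD : IsStep n (m - l + 1) (fun s => a (l + s)) (mergedLen i l m k) D)
    (t : Fin n) (s : ℕ) (hs : s < k)
    (h1 : ∑ p ∈ Finset.range s, i p ≤ t.val)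
    (h2 : t.val < ∑ p ∈ Finset.range (s + 1), i p) :
    D t = a (l + min (m - l) (s - l)) := by
  set u := min (m - l) (s - l) with hu
  have hub : u < m - l + 1 := by omega
  refine hD u hub t ?_ ?_
  · -- lower bound
    rcases Nat.eq_zero_or_pos u with h | h
    · simp [h]
    · have hul : u ≤ m - l := by omega
      rw [merged_sum i l m k h hul]
      have : l + u ≤ s := by omega
      exact le_trans (sum_range_mono i this) h1
  · -- upper bound
    rcases Nat.lt_or_ge u (m - l) with h | h
    · have huu : u + 1 ≤ m - l := by omega
      rw [merged_sum i l m k (by omega) huu]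
      have : s + 1 ≤ l + (u + 1) := by omega
      exact lt_of_lt_of_le h2 (sum_range_mono i this)
    · have hu' : u = m - l := by omega
      rw [hu', merged_sum_total i l m k hlm (le_of_lt hmk), hi]
      exact t.2

theorem stmt4 (n k l m : ℕ) (hlm : l < m) (hmk : m ≤ k - 1) (hk : 0 < k)
    (a : ℕ → Fin n) (ha : ∀ p q : ℕ, p < q → q < k → a p < a q)
    (i j hseq : ℕ → ℕ)
    (hi : ∑ p ∈ Finset.range k, i p = n)
    (hj : ∑ p ∈ Finset.range k, j p = n)
    (hhs : ∑ p ∈ Finset.range k, hseq p = n)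
    (α β : Fin n → Fin n)
    (hα : IsStep n k a i α) (hmα : Monotone α)
    (hβ : IsStep n k a j β) (hmβ : Monotone β)
    -- `hseq` is the block-length sequence of the sum `α + β`
    (hsum : IsStep n k a hseq (fun t => max (α t) (β t)))
    (Dα Dβ Dγ : Fin n → Fin n)
    (hDα : IsStep n (m - l + 1) (fun s => a (l + s)) (mergedLen i l m k) Dα)
    (hDβ : IsStep n (m - l + 1) (fun s => a (l + s)) (mergedLen j l m k) Dβ)
    (hDγ : IsStep n (m - l + 1) (fun s => a (l + s)) (mergedLen hseq l m k) Dγ) :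
    -- ∂(α + β) = ∂(α) + ∂(β)
    Dγ = fun t => max (Dα t) (Dβ t) := by
  have hmk' : m < k := by omega
  have hmono : ∀ p q : ℕ, p ≤ q → q < k → a p ≤ a q := by
    intro p q hpq hq
    rcases eq_or_lt_of_le hpq with h | h
    · rw [h]
    · exact le_of_lt (ha p q h hq)
  funext t
  obtain ⟨sα, hsα, hα1, hα2⟩ := exists_block n k i hi t
  obtain ⟨sβ, hsβ, hβ1, hβ2⟩ := exists_block n k j hj t
  obtain ⟨sγ, hsγ, hγ1, hγ2⟩ := exists_block n k hseq hhs t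
  have hαv : α t = a sα := hα sα hsα t hα1 hα2
  have hβv : β t = a sβ := hβ sβ hsβ t hβ1 hβ2
  have hγv : max (α t) (β t) = a sγ := hsum sγ hsγ t hγ1 hγ2
  have hmax : max (α t) (β t) = a (max sα sβ) := by
    rw [hαv, hβv]
    rcases le_total sα sβ with h | h
    · rw [max_eq_right (hmono _ _ h hsβ), max_eq_right h]
    · rw [max_eq_left (hmono _ _ h hsα), max_eq_left h]
  have hsγeq : sγ = max sα sβ := by
    by_contra h
    have hmb : max sα sβ < k := by omega
    rcases Nat.lt_or_ge sγ (max sα sβ) with hlt | hge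
    · exact absurd (hγv ▸ hmax ▸ ha sγ (max sα sβ) hlt hmb) (lt_irrefl _)
    · have hlt : max sα sβ < sγ := by omega
      exact absurd (hγv ▸ hmax ▸ ha (max sα sβ) sγ hlt hsγ) (lt_irrefl _)
  have hDαv := proj_val n k l m hlm hmk' a i hi Dα hDα t sα hsα hα1 hα2
  have hDβv := proj_val n k l m hlm hmk' a j hj Dβ hDβ t sβ hsβ hβ1 hβ2
  have hDγv := proj_val n k l m hlm hmk' a hseq hhs Dγ hDγ t sγ hsγ hγ1 hγ2
  rw [hDγv, hDαv, hDβv, hsγeq]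
  have hclamp : min (m - l) (max sα sβ - l) =
      max (min (m - l) (sα - l)) (min (m - l) (sβ - l)) := by omega
  rw [hclamp]
  set uα := min (m - l) (sα - l) with huα
  set uβ := min (m - l) (sβ - l) with huβ
  have hbα : l + uα < k := by omega
  have hbβ : l + uβ < k := by omega
  rcases le_total uα uβ with h | h
  · rw [max_eq_right h]
    exact (max_eq_right (hmono (l + uα) (l + uβ) (by omega) hbβ)).symm
  · rw [max_eq_left h]
    exact (max_eq_left (hmono (l + uβ) (l + uα) (by omega) hbα)).symm
end

section
/- Fix A = {a_0 < ... < a_{k-1}} ⊆ {0,...,n-1} and 0 ≤ ℓ < m ≤ k−1. The set S = { α monotone with image in A : α(a_0) = α(a_1) = ... = α(a_ℓ) ≥ a_{ℓ+1} and α(a_m) ≤ a_m } is closed under pointwise maximum and under composition (α·β)(x) = β(α(x)). -/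
/-- Membership in `S` : `α` is monotone with image in `A = {a_0 < … < a_{k-1}}`,
`α(a_0) = … = α(a_ℓ) ≥ a_{ℓ+1}` and `α(a_m) ≤ a_m`. -/
def memS (n k l m : ℕ) (a : ℕ → Fin n) (α : Fin n → Fin n) : Prop :=
  Monotone α ∧ (∀ t : Fin n, ∃ s < k, α t = a s) ∧
    (∀ p ≤ l, α (a p) = α (a 0)) ∧ a (l + 1) ≤ α (a 0) ∧ α (a m) ≤ a m

theorem stmt6 (n k l m : ℕ) (hlm : l < m) (hmk : m ≤ k - 1) (hk : 0 < k)
    (a : ℕ → Fin n) (ha : ∀ p q : ℕ, p < q → q < k → a p < a q)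
    (α β : Fin n → Fin n) (hα : memS n k l m a α) (hβ : memS n k l m a β) :
    -- closure under pointwise maximum
    memS n k l m a (fun x => max (α x) (β x)) ∧
    -- closure under composition (α·β)(x) = β(α(x))
    memS n k l m a (fun x => β (α x)) := by
  obtain ⟨hαm, hαim, hαc, hαl, hαM⟩ := hα
  obtain ⟨hβm, hβim, hβc, hβl, hβM⟩ := hβ
  have ha0 : ∀ s, s < k → a 0 ≤ a s := by
    intro s hs
    rcases Nat.eq_zero_or_pos s with h | h
    · subst h; exact le_refl _
    · exact le_of_lt (ha 0 s h hs)
  constructor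
  · refine ⟨fun x y hxy => max_le_max (hαm hxy) (hβm hxy), ?_, ?_, ?_, ?_⟩
    · intro t
      rcases le_total (α t) (β t) with h | h
      · obtain ⟨s, hs, he⟩ := hβim t
        exact ⟨s, hs, by show max (α t) (β t) = a s; rw [max_eq_right h, he]⟩
      · obtain ⟨s, hs, he⟩ := hαim t
        exact ⟨s, hs, by show max (α t) (β t) = a s; rw [max_eq_left h, he]⟩
    · intro p hp; simp [hαc p hp, hβc p hp]
    · exact le_trans hαl (le_max_left _ _)
    · exact max_le hαM hβM
  · refine ⟨fun x y hxy => hβm (hαm hxy), ?_, ?_, ?_, ?_⟩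
    · intro t; exact hβim (α t)
    · intro p hp; simp [hαc p hp]
    · obtain ⟨s, hs, he⟩ := hαim (a 0)
      calc a (l + 1) ≤ β (a 0) := hβl
        _ ≤ β (α (a 0)) := hβm (he ▸ ha0 s hs)
    · exact le_trans (hβm hαM) hβM
end

section
/- With S = { α : α(a_0) = ... = α(a_ℓ) ≥ a_{ℓ+1}, α(a_m) ≤ a_m } and R = { α : α(a_ℓ) ≤ a_ℓ, α(a_m) ≤ a_m } inside the semiring of monotone self-maps of {0,...,n-1} with image in A = {a_0 < ... < a_{k-1}}, the sets S and R are disjoint and their union D = S ∪ R is closed under pointwise maximum and under composition; in particular, for α ∈ S and β ∈ R one has α + β ∈ S and β·α ∈ S (where (β·α)(x) = α(β(x))). -/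
/-- `R` : monotone, image in `A`, `α(a_ℓ) ≤ a_ℓ`, `α(a_m) ≤ a_m`. -/
def memR (n k l m : ℕ) (a : ℕ → Fin n) (α : Fin n → Fin n) : Prop :=
  Monotone α ∧ (∀ t : Fin n, ∃ s < k, α t = a s) ∧
    α (a l) ≤ a l ∧ α (a m) ≤ a m

/-- `D = S ∪ R`. -/
def memD (n k l m : ℕ) (a : ℕ → Fin n) (α : Fin n → Fin n) : Prop :=
  memS n k l m a α ∨ memR n k l m a α

section Aux

variable {n k l m : ℕ} {a : ℕ → Fin n}

lemma a_mono (hk : k ≤ k) (ha : ∀ p q : ℕ, p < q → q < k → a p < a q)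
    {p q : ℕ} (hpq : p ≤ q) (hq : q < k) : a p ≤ a q := by
  rcases eq_or_lt_of_le hpq with h | h
  · rw [h]
  · exact le_of_lt (ha p q h hq)

lemma aux_idx (ha : ∀ p q : ℕ, p < q → q < k → a p < a q)
    {s j : ℕ} (hs : s < k) (h : a s ≤ a j) : s ≤ j := by
  by_contra hc
  exact absurd h (not_le.2 (ha j s (not_le.1 hc) hs))

lemma img_max {α β : Fin n → Fin n}
    (hα : ∀ t : Fin n, ∃ s < k, α t = a s) (hβ : ∀ t : Fin n, ∃ s < k, β t = a s) :
    ∀ t : Fin n, ∃ s < k, max (α t) (β t) = a s := by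
  intro t
  rcases le_total (α t) (β t) with h | h
  · obtain ⟨s, hs, he⟩ := hβ t
    exact ⟨s, hs, by rw [max_eq_right h, he]⟩
  · obtain ⟨s, hs, he⟩ := hα t
    exact ⟨s, hs, by rw [max_eq_left h, he]⟩

lemma S_max_S {α β : Fin n → Fin n} (hα : memS n k l m a α) (hβ : memS n k l m a β) :
    memS n k l m a (fun x => max (α x) (β x)) := by
  obtain ⟨hm1, hi1, hc1, hg1, hle1⟩ := hα
  obtain ⟨hm2, hi2, hc2, hg2, hle2⟩ := hβ
  refine ⟨fun x y h => max_le_max (hm1 h) (hm2 h), img_max hi1 hi2, ?_,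
    le_trans hg1 (le_max_left _ _), max_le hle1 hle2⟩
  intro p hp; simp only [hc1 p hp, hc2 p hp]

lemma R_max_R {α β : Fin n → Fin n} (hα : memR n k l m a α) (hβ : memR n k l m a β) :
    memR n k l m a (fun x => max (α x) (β x)) := by
  obtain ⟨hm1, hi1, hl1, hle1⟩ := hα
  obtain ⟨hm2, hi2, hl2, hle2⟩ := hβ
  exact ⟨fun x y h => max_le_max (hm1 h) (hm2 h), img_max hi1 hi2,
    max_le hl1 hl2, max_le hle1 hle2⟩

lemma S_max_R (hlm : l < m) (hmk : m ≤ k - 1) (hk : 0 < k)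
    (ha : ∀ p q : ℕ, p < q → q < k → a p < a q)
    {α β : Fin n → Fin n} (hα : memS n k l m a α) (hβ : memR n k l m a β) :
    memS n k l m a (fun x => max (α x) (β x)) := by
  obtain ⟨hm1, hi1, hc1, hg1, hle1⟩ := hα
  obtain ⟨hm2, hi2, hl2, hle2⟩ := hβ
  have hl1k : l + 1 < k := by omega
  have hlk : l < k := by omega
  have key : ∀ p ≤ l, max (α (a p)) (β (a p)) = α (a 0) := by
    intro p hp
    have h1 : β (a p) ≤ a l := le_trans (hm2 (a_mono le_rfl ha hp hlk)) hl2
    have h2 : β (a p) ≤ α (a p) := by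
      rw [hc1 p hp]
      exact le_trans h1 (le_trans (le_of_lt (ha l (l + 1) (by omega) hl1k)) hg1)
    rw [max_eq_left h2, hc1 p hp]
  refine ⟨fun x y h => max_le_max (hm1 h) (hm2 h), img_max hi1 hi2, ?_, ?_, max_le hle1 hle2⟩
  · intro p hp
    show max (α (a p)) (β (a p)) = max (α (a 0)) (β (a 0))
    rw [key p hp, key 0 (Nat.zero_le l)]
  · show a (l + 1) ≤ max (α (a 0)) (β (a 0))
    rw [key 0 (Nat.zero_le l)]; exact hg1

lemma S_comp_S (hlm : l < m) (hmk : m ≤ k - 1) (hk : 0 < k)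
    (ha : ∀ p q : ℕ, p < q → q < k → a p < a q)
    {α β : Fin n → Fin n} (hα : memS n k l m a α) (hβ : memS n k l m a β) :
    memS n k l m a (fun x => β (α x)) := by
  obtain ⟨hm1, hi1, hc1, hg1, hle1⟩ := hα
  obtain ⟨hm2, hi2, hc2, hg2, hle2⟩ := hβ
  refine ⟨hm2.comp hm1, fun t => hi2 (α t), ?_, ?_, le_trans (hm2 hle1) hle2⟩
  · intro p hp; show β (α (a p)) = β (α (a 0)); rw [hc1 p hp]
  · have h0 : a 0 ≤ α (a 0) :=
      le_trans (a_mono le_rfl ha (Nat.zero_le (l + 1)) (by omega)) hg1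
    exact le_trans hg2 (le_of_eq_of_le (hc2 0 (Nat.zero_le l)).symm (hm2 h0))

lemma R_comp_R {α β : Fin n → Fin n} (hα : memR n k l m a α) (hβ : memR n k l m a β) :
    memR n k l m a (fun x => β (α x)) := by
  obtain ⟨hm1, hi1, hl1, hle1⟩ := hα
  obtain ⟨hm2, hi2, hl2, hle2⟩ := hβ
  exact ⟨hm2.comp hm1, fun t => hi2 (α t), le_trans (hm2 hl1) hl2,
    le_trans (hm2 hle1) hle2⟩

/-- compose: first `α ∈ R`, then `β ∈ S`; result in `S`. -/
lemma R_then_S (hlm : l < m) (hmk : m ≤ k - 1) (hk : 0 < k)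
    (ha : ∀ p q : ℕ, p < q → q < k → a p < a q)
    {α β : Fin n → Fin n} (hα : memR n k l m a α) (hβ : memS n k l m a β) :
    memS n k l m a (fun x => β (α x)) := by
  obtain ⟨hm1, hi1, hl1, hle1⟩ := hα
  obtain ⟨hm2, hi2, hc2, hg2, hle2⟩ := hβ
  have hlk : l < k := by omega
  have key : ∀ p ≤ l, β (α (a p)) = β (a 0) := by
    intro p hp
    obtain ⟨s, hs, he⟩ := hi1 (a p)
    have h1 : a s ≤ a l := le_trans (le_of_eq he.symm)
      (le_trans (hm1 (a_mono le_rfl ha hp hlk)) hl1)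
    have hsl : s ≤ l := aux_idx ha hs h1
    rw [he, hc2 s hsl]
  refine ⟨hm2.comp hm1, fun t => hi2 (α t), ?_, ?_, le_trans (hm2 hle1) hle2⟩
  · intro p hp
    show β (α (a p)) = β (α (a 0))
    rw [key p hp, key 0 (Nat.zero_le l)]
  · show a (l + 1) ≤ β (α (a 0))
    rw [key 0 (Nat.zero_le l)]; exact hg2

/-- compose: first `α ∈ S`, then `β ∈ R`; result in `D`. -/
lemma S_then_R (hlm : l < m) (hmk : m ≤ k - 1) (hk : 0 < k)
    (ha : ∀ p q : ℕ, p < q → q < k → a p < a q)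
    {α β : Fin n → Fin n} (hα : memS n k l m a α) (hβ : memR n k l m a β) :
    memD n k l m a (fun x => β (α x)) := by
  obtain ⟨hm1, hi1, hc1, hg1, hle1⟩ := hα
  obtain ⟨hm2, hi2, hl2, hle2⟩ := hβ
  have hlem : β (α (a m)) ≤ a m := le_trans (hm2 hle1) hle2
  rcases le_or_gt (β (α (a 0))) (a l) with h | h
  · refine Or.inr ⟨hm2.comp hm1, fun t => hi2 (α t), ?_, hlem⟩
    show β (α (a l)) ≤ a l
    rw [hc1 l le_rfl]; exact h
  · refine Or.inl ⟨hm2.comp hm1, fun t => hi2 (α t), ?_, ?_, hlem⟩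
    · intro p hp; show β (α (a p)) = β (α (a 0)); rw [hc1 p hp]
    · obtain ⟨s, hs, he⟩ := hi2 (α (a 0))
      show a (l + 1) ≤ β (α (a 0))
      rw [he] at h ⊢
      have hls : l < s := by
        by_contra hc
        exact absurd (a_mono le_rfl ha (not_lt.1 hc) (by omega)) (not_le.2 h)
      exact a_mono le_rfl ha hls hs

end Aux

theorem stmt8 (n k l m : ℕ) (hlm : l < m) (hmk : m ≤ k - 1) (hk : 0 < k)
    (a : ℕ → Fin n) (ha : ∀ p q : ℕ, p < q → q < k → a p < a q) :
    -- S and R are disjoint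
    (∀ α : Fin n → Fin n, ¬ (memS n k l m a α ∧ memR n k l m a α)) ∧
    -- D = S ∪ R is closed under pointwise maximum and under composition
    (∀ α β : Fin n → Fin n, memD n k l m a α → memD n k l m a β →
      memD n k l m a (fun x => max (α x) (β x)) ∧ memD n k l m a (fun x => β (α x))) ∧
    -- for α ∈ S, β ∈ R : α + β ∈ S and β·α ∈ S, where (β·α)(x) = α(β(x))
    (∀ α β : Fin n → Fin n, memS n k l m a α → memR n k l m a β →
      memS n k l m a (fun x => max (α x) (β x)) ∧ memS n k l m a (fun x => α (β x))) := by
  refine ⟨?_, ?_, ?_⟩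
  · rintro α ⟨⟨_, _, hc1, hg1, _⟩, ⟨_, _, hl2, _⟩⟩
    have h1 : a (l + 1) ≤ a l := le_trans hg1 (le_of_eq_of_le (hc1 l le_rfl).symm hl2)
    exact absurd h1 (not_le.2 (ha l (l + 1) (by omega) (by omega)))
  · rintro α β (hα | hα) (hβ | hβ)
    · exact ⟨Or.inl (S_max_S hα hβ), Or.inl (S_comp_S hlm hmk hk ha hα hβ)⟩
    · exact ⟨Or.inl (S_max_R hlm hmk hk ha hα hβ), S_then_R hlm hmk hk ha hα hβ⟩
    · have hmax : (fun x => max (α x) (β x)) = fun x => max (β x) (α x) :=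
        funext fun x => max_comm _ _
      exact ⟨hmax ▸ Or.inl (S_max_R hlm hmk hk ha hβ hα),
        Or.inl (R_then_S hlm hmk hk ha hα hβ)⟩
    · exact ⟨Or.inr (R_max_R hα hβ), Or.inr (R_comp_R hα hβ)⟩
  · intro α β hα hβ
    exact ⟨S_max_R hlm hmk hk ha hα hβ, R_then_S hlm hmk hk ha hβ hα⟩
end

section
/- Let D = S ∪ R, where S = { α : α(a_0) = ... = α(a_ℓ) ≥ a_{ℓ+1}, α(a_m) ≤ a_m } and R = { α : α(a_ℓ) ≤ a_ℓ, α(a_m) ≤ a_m } inside the semiring of monotone self-maps of {0,...,n-1} with image in A = {a_0 < ... < a_{k-1}}, and let ∂ be the projection ∂(α)(t) = max(a_ℓ, min(α(t), a_m)). Then ∂ satisfies the Leibniz rule on D: for all α, β ∈ D, ∂(α·β) = ∂(α)·β + α·∂(β), where (α·β)(x) = β(α(x)) and + is pointwise maximum. Hence ∂ is a derivation on D. -/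
/-- The projection `∂(α)(t) = max(a_ℓ, min(α(t), a_m))`. -/
def proj (n l m : ℕ) (a : ℕ → Fin n) (α : Fin n → Fin n) : Fin n → Fin n :=
  fun t => max (a l) (min (α t) (a m))

lemma key_ineq (n k l m : ℕ) (hlm : l < m) (hmk : m ≤ k - 1) (hk : 0 < k)
    (a : ℕ → Fin n) (ha : ∀ p q : ℕ, p < q → q < k → a p < a q)
    (β : Fin n → Fin n) (hβ : memD n k l m a β)
    (s : ℕ) (hs : s < k) :
    β (max (a l) (min (a s) (a m))) ≤ max (a l) (min (β (a s)) (a m)) := by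
  have hmk' : m < k := lt_of_le_of_lt hmk (Nat.sub_lt hk Nat.one_pos)
  have hlk : l < k := hlm.trans hmk'
  have hlm' : a l ≤ a m := (ha l m hlm hmk').le
  have hmono : Monotone β := by rcases hβ with h | h <;> exact h.1
  have hβm : β (a m) ≤ a m := by
    rcases hβ with h | h
    · exact h.2.2.2.2
    · exact h.2.2.2
  rcases le_or_gt (a s) (a m) with h1 | h1
  · rcases le_or_gt (a l) (a s) with h2 | h2
    · -- clamp is a s itself
      rw [min_eq_left h1, max_eq_right h2]
      have : β (a s) ≤ a m := (hmono h1).trans hβm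
      rw [min_eq_left this]
      exact le_max_right _ _
    · -- a s < a l
      have hsl : s < l := by
        by_contra hsl
        push_neg at hsl
        rcases eq_or_lt_of_le hsl with rfl | hsl'
        · exact absurd h2 (lt_irrefl _)
        · exact absurd (ha l s hsl' hs) (not_lt.mpr h2.le)
      rw [min_eq_left (h2.le.trans hlm'), max_eq_left h2.le]
      rcases hβ with h | h
      · -- S case : β constant on a_0 … a_l
        have hc : β (a l) = β (a s) := by
          rw [h.2.2.1 l le_rfl, h.2.2.1 s hsl.le]
        rw [hc]
        have : β (a s) ≤ a m := (hmono h1).trans hβm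
        rw [min_eq_left this]
        exact le_max_right _ _
      · exact le_trans h.2.2.1 (le_max_left _ _)
  · -- a m < a s : clamp is a m
    rw [min_eq_right h1.le, max_eq_right hlm']
    have h3 : β (a m) ≤ β (a s) := hmono h1.le
    calc β (a m) ≤ min (β (a s)) (a m) := le_min h3 hβm
      _ ≤ _ := le_max_right _ _

theorem stmt9 (n k l m : ℕ) (hlm : l < m) (hmk : m ≤ k - 1) (hk : 0 < k)
    (a : ℕ → Fin n) (ha : ∀ p q : ℕ, p < q → q < k → a p < a q)
    (α β : Fin n → Fin n) (hα : memD n k l m a α) (hβ : memD n k l m a β) :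
    -- Leibniz rule: ∂(α·β) = ∂(α)·β + α·∂(β), with (α·β)(x) = β(α(x)) and + pointwise max
    proj n l m a (fun x => β (α x))
      = fun x => max (β (proj n l m a α x)) (proj n l m a β (α x)) := by
  funext x
  simp only [proj]
  have himg : ∃ s < k, α x = a s := by
    rcases hα with h | h
    · exact h.2.1 x
    · exact h.2.1 x
  rcases himg with ⟨s, hs, hx⟩
  rw [hx]
  exact (max_eq_right (key_ineq n k l m hlm hmk hk a ha β hβ s hs)).symm
end

section
/- Let ∂(α)(t) = max(a_ℓ, min(α(t), a_m)) be the projection on the semiring of monotone self-maps of {0,...,n-1} with image in A = {a_0 < ... < a_{k-1}}, where 0 ≤ ℓ < m ≤ k−1. If β is a monotone self-map with image in A satisfying β(a_m) > a_m, then there exists a monotone self-map α with image in A such that ∂(α·β) ≠ ∂(α)·β + α·∂(β). Consequently D = S ∪ R (as defined from ℓ, m) is the maximal subsemiring on which ∂ is a derivation. -/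
theorem stmt10 (n k l m : ℕ) (hlm : l < m) (hmk : m ≤ k - 1) (hk : 0 < k)
    (a : ℕ → Fin n) (ha : ∀ p q : ℕ, p < q → q < k → a p < a q)
    (β : Fin n → Fin n) (hβ : Monotone β) (hβA : ∀ t : Fin n, ∃ s < k, β t = a s)
    (hβm : a m < β (a m)) :
    -- the Leibniz rule fails for some α in the simplex
    (∃ α : Fin n → Fin n, Monotone α ∧ (∀ t : Fin n, ∃ s < k, α t = a s) ∧
      proj n l m a (fun x => β (α x))
        ≠ fun x => max (β (proj n l m a α x)) (proj n l m a β (α x))) ∧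
    -- consequently D = S ∪ R is the maximal subsemiring on which ∂ is a derivation
    (∀ T : Set (Fin n → Fin n),
      (∀ f ∈ T, Monotone f ∧ ∀ t : Fin n, ∃ s < k, f t = a s) →
      {α | memS n k l m a α ∨ memR n k l m a α} ⊆ T →
      (∀ f ∈ T, ∀ g ∈ T, (fun x => max (f x) (g x)) ∈ T ∧ (fun x => g (f x)) ∈ T) →
      (∀ f ∈ T, ∀ g ∈ T,
        proj n l m a (fun x => g (f x))
          = fun x => max (g (proj n l m a f x)) (proj n l m a g (f x))) →
      T = {α | memS n k l m a α ∨ memR n k l m a α}) := by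
  have hmk' : m < k := lt_of_le_of_lt hmk (Nat.sub_lt hk Nat.one_pos)
  have hlk : l < k := hlm.trans hmk'
  have amono : ∀ p q : ℕ, p ≤ q → q < k → a p ≤ a q := fun p q hpq hq =>
    hpq.lt_or_eq.elim (fun h => (ha p q h hq).le) (fun h => by rw [h])
  have halm : a l ≤ a m := (ha l m hlm hmk').le
  have ha0m : a 0 ≤ a m := amono 0 m (Nat.zero_le m) hmk'
  have ha0l : a 0 ≤ a l := amono 0 l (Nat.zero_le l) hlk
  constructor
  · refine ⟨fun _ => a m, monotone_const, fun t => ⟨m, hmk', rfl⟩, ?_⟩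
    intro hEq
    have h := congrFun hEq (a 0)
    simp only [proj] at h
    rw [min_self, min_eq_right hβm.le, max_eq_right halm,
      max_eq_left hβm.le] at h
    exact absurd h (ne_of_lt hβm)
  · intro T hT1 hT2 _hT3 hT4
    refine Set.Subset.antisymm ?_ hT2
    intro f hfT
    obtain ⟨hfmono, hfA⟩ := hT1 f hfT
    have hfm : f (a m) ≤ a m := by
      by_contra hgt
      push_neg at hgt
      have hconst : memS n k l m a (fun _ => a m) :=
        ⟨monotone_const, fun t => ⟨m, hmk', rfl⟩, fun p _ => rfl,
          amono (l + 1) m hlm hmk', le_refl _⟩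
      have hcT : (fun _ : Fin n => a m) ∈ T := hT2 (Or.inl hconst)
      have h := congrFun (hT4 _ hcT f hfT) (a 0)
      simp only [proj] at h
      rw [min_self, min_eq_right hgt.le, max_eq_right halm,
        max_eq_left hgt.le] at h
      exact absurd h (ne_of_lt hgt)
    by_cases hfl : f (a l) ≤ a l
    · exact Or.inr ⟨hfmono, hfA, hfl, hfm⟩
    · push_neg at hfl
      have hfl1 : a (l + 1) ≤ f (a l) := by
        obtain ⟨s, hs, hfs⟩ := hfA (a l)
        rw [hfs] at hfl ⊢
        have hls : l < s := by
          by_contra h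
          push_neg at h
          exact absurd (amono s l h hlk) (not_le.mpr hfl)
        exact amono (l + 1) s hls hs
      by_cases h0 : f (a 0) = f (a l)
      · left
        refine ⟨hfmono, hfA, fun p hp => ?_, h0 ▸ hfl1, hfm⟩
        exact le_antisymm (h0 ▸ hfmono (amono p l hp hlk))
          (hfmono (amono 0 p (Nat.zero_le p) (lt_of_le_of_lt hp hlk)))
      · exfalso
        have h0lt : f (a 0) < f (a l) := lt_of_le_of_ne (hfmono ha0l) h0
        have hg : memR n k l m a (fun _ => a 0) :=
          ⟨monotone_const, fun t => ⟨0, hk, rfl⟩, ha0l, ha0m⟩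
        have hgT : (fun _ : Fin n => a 0) ∈ T := hT2 (Or.inr hg)
        have heq := congrFun (hT4 _ hgT f hfT) (a 0)
        simp only [proj] at heq
        have hf0m : f (a 0) ≤ a m := (hfmono ha0m).trans hfm
        rw [min_eq_left ha0m, max_eq_left ha0l, min_eq_left hf0m] at heq
        have hlt : max (a l) (f (a 0)) < f (a l) := max_lt hfl h0lt
        rw [max_eq_left hlt.le] at heq
        exact absurd heq (ne_of_lt hlt)
end

section
/- For the special case ℓ = 0: the set D_m = { α monotone self-map of {0,...,n-1} with image in A : α(a_m) ≤ a_m } is a subsemiring, and the clamping map ∂_m(α)(t) = min(α(t), a_m) satisfies both additivity ∂_m(α+β) = ∂_m(α) + ∂_m(β) and the Leibniz rule ∂_m(α·β) = ∂_m(α)·β + α·∂_m(β) for all α, β ∈ D_m. -/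
/-- `D_m` : monotone, image in `A = {a_0 < … < a_{k-1}}`, `α(a_m) ≤ a_m`. -/
def memDm (n k m : ℕ) (a : ℕ → Fin n) (α : Fin n → Fin n) : Prop :=
  Monotone α ∧ (∀ t : Fin n, ∃ s < k, α t = a s) ∧ α (a m) ≤ a m

/-- The clamping map `∂_m(α)(t) = min(α(t), a_m)`. -/
def projm (n m : ℕ) (a : ℕ → Fin n) (α : Fin n → Fin n) : Fin n → Fin n :=
  fun t => min (α t) (a m)

theorem stmt11 (n k m : ℕ) (hm : 0 < m) (hmk : m ≤ k - 1) (hk : 0 < k)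
    (a : ℕ → Fin n) (ha : ∀ p q : ℕ, p < q → q < k → a p < a q)
    (α β : Fin n → Fin n) (hα : memDm n k m a α) (hβ : memDm n k m a β) :
    -- D_m is closed under pointwise maximum and composition (a subsemiring)
    memDm n k m a (fun x => max (α x) (β x)) ∧
    memDm n k m a (fun x => β (α x)) ∧
    -- additivity: ∂_m(α + β) = ∂_m(α) + ∂_m(β)
    projm n m a (fun x => max (α x) (β x))
      = (fun x => max (projm n m a α x) (projm n m a β x)) ∧
    -- Leibniz rule: ∂_m(α·β) = ∂_m(α)·β + α·∂_m(β), with (α·β)(x) = β(α(x))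
    projm n m a (fun x => β (α x))
      = fun x => max (β (projm n m a α x)) (projm n m a β (α x)) := by
  obtain ⟨hαm, hαim, hαb⟩ := hα
  obtain ⟨hβm, hβim, hβb⟩ := hβ
  refine ⟨⟨?_, ?_, ?_⟩, ⟨?_, ?_, ?_⟩, ?_, ?_⟩
  · exact fun x y h => max_le_max (hαm h) (hβm h)
  · intro t
    rcases le_total (α t) (β t) with h | h
    · obtain ⟨s, hs, hst⟩ := hβim t
      exact ⟨s, hs, by rw [show (fun x => max (α x) (β x)) t = max (α t) (β t) from rfl, max_eq_right h, hst]⟩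
    · obtain ⟨s, hs, hst⟩ := hαim t
      exact ⟨s, hs, by rw [show (fun x => max (α x) (β x)) t = max (α t) (β t) from rfl, max_eq_left h, hst]⟩
  · exact max_le hαb hβb
  · exact fun x y h => hβm (hαm h)
  · exact fun t => hβim (α t)
  · exact le_trans (hβm hαb) hβb
  · funext t
    simp only [projm]
    exact min_max_distrib_right (α t) (β t) (a m)
  · funext t
    simp only [projm]
    rcases le_total (α t) (a m) with h | h
    · rw [min_eq_left h]
      have hb : β (α t) ≤ a m := le_trans (hβm h) hβb
      rw [min_eq_left hb]
      simp
    · rw [min_eq_right h]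
      have h1 : β (a m) ≤ min (β (α t)) (a m) := le_min (hβm h) hβb
      rw [max_eq_right h1]
end

section
/- The number of monotone self-maps α of the chain {0,1,...,n-1} satisfying α(t) ≤ t for all t is the n-th Catalan number C_n = (1/(n+1))·binomial(2n, n). -/
/-- `ℕ`-valued model of monotone subdiagonal maps on `{0,...,n-1}`. -/
def TT (n : ℕ) : Type :=
  {a : ℕ → ℕ // (∀ i j, i ≤ j → j < n → a i ≤ a j) ∧ (∀ t, t < n → a t ≤ t) ∧
    (∀ t, n ≤ t → a t = 0)}

def equivST (n : ℕ) :
    {α : Fin n → Fin n // Monotone α ∧ ∀ t : Fin n, α t ≤ t} ≃ TT n where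
  toFun x := ⟨fun t => if h : t < n then (x.1 ⟨t, h⟩ : ℕ) else 0, by
    obtain ⟨α, hm, hd⟩ := x
    refine ⟨?_, ?_, ?_⟩
    · intro i j hij hj
      have hi : i < n := lt_of_le_of_lt hij hj
      simp only [dif_pos hi, dif_pos hj]
      exact hm (show (⟨i, hi⟩ : Fin n) ≤ ⟨j, hj⟩ from hij)
    · intro t ht
      simp only [dif_pos ht]
      exact hd ⟨t, ht⟩
    · intro t ht
      simp only [dif_neg (not_lt.2 ht)]⟩
  invFun x := ⟨fun t => ⟨x.1 t, lt_of_le_of_lt (x.2.2.1 t t.isLt) t.isLt⟩, by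
    obtain ⟨a, h1, h2, h3⟩ := x
    constructor
    · intro s t hst
      exact h1 s t hst t.isLt
    · intro t
      exact h2 t t.isLt⟩
  left_inv := by
    rintro ⟨α, hm, hd⟩
    apply Subtype.ext
    funext t
    apply Fin.ext
    simp [t.isLt]
  right_inv := by
    rintro ⟨a, h1, h2, h3⟩
    apply Subtype.ext
    funext t
    by_cases h : t < n
    · simp [h]
    · simp [h, h3 t (not_lt.1 h)]

instance TT.finite (n : ℕ) : Finite (TT n) := Finite.of_equiv _ (equivST n)

/-- `Pd n a t` : `t` is a "return time" (or the sentinel `n+1`). -/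
def Pd (n : ℕ) (a : ℕ → ℕ) (t : ℕ) : Prop := t = n + 1 ∨ (0 < t ∧ t ≤ n ∧ a t = t)

instance (n : ℕ) (a : ℕ → ℕ) (t : ℕ) : Decidable (Pd n a t) := by
  unfold Pd; infer_instance

lemma Pd_ex (n : ℕ) (a : ℕ → ℕ) : ∃ t, Pd n a t := ⟨n + 1, Or.inl rfl⟩

/-- first return time. -/
def jj (n : ℕ) (a : ℕ → ℕ) : ℕ := Nat.find (Pd_ex n a)

lemma jj_spec (n : ℕ) (a : ℕ → ℕ) : Pd n a (jj n a) := Nat.find_spec _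

lemma jj_min (n : ℕ) (a : ℕ → ℕ) : ∀ t < jj n a, ¬ Pd n a t := fun _ ht => Nat.find_min _ ht

lemma jj_le (n : ℕ) (a : ℕ → ℕ) : jj n a ≤ n + 1 := Nat.find_le (Or.inl rfl)

lemma jj_pos (n : ℕ) (a : ℕ → ℕ) : 0 < jj n a := by
  rcases Nat.eq_zero_or_pos (jj n a) with h | h
  · have hs := jj_spec n a
    rw [h] at hs
    unfold Pd at hs
    omega
  · exact h

lemma jj_eq (n : ℕ) (a : ℕ → ℕ) (m : ℕ) (h1 : Pd n a m) (h2 : ∀ t < m, ¬ Pd n a t) :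
    jj n a = m :=
  le_antisymm (Nat.find_le h1)
    (le_of_not_gt fun h => h2 _ h (jj_spec n a))

/-- fiber statistic. -/
def fj (n : ℕ) (a : TT (n + 1)) : Fin (n + 1) :=
  ⟨jj n a.1 - 1, by have := jj_le n a.1; have := jj_pos n a.1; omega⟩

def glue (n i : ℕ) (b c : ℕ → ℕ) : ℕ → ℕ := fun t =>
  if t = 0 then 0 else if t ≤ i then b (t - 1) else if t ≤ n then i + 1 + c (t - i - 1) else 0

def fiberEquiv (n : ℕ) (i : Fin (n + 1)) :
    {a : TT (n + 1) // fj n a = i} ≃ TT i × TT (n - i) where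
  toFun x := by
    obtain ⟨⟨a, h1, h2, h3⟩, hx⟩ := x
    have hi : (i : ℕ) ≤ n := by omega
    have hj : jj n a = i + 1 := by
      have h := congrArg Fin.val hx
      simp only [fj] at h
      have := jj_pos n a
      omega
    have hmin : ∀ t, 0 < t → t ≤ (i : ℕ) → a t < t := by
      intro t ht hti
      have hnp := jj_min n a t (by omega)
      unfold Pd at hnp
      have := h2 t (by omega)
      omega
    refine ⟨⟨fun t => if t < (i : ℕ) then a (t + 1) else 0, ?_, ?_, ?_⟩,
           ⟨fun u => if u < n - (i : ℕ) then a (u + i + 1) - (i + 1) else 0, ?_, ?_, ?_⟩⟩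
    · intro s t hst ht
      dsimp only
      rw [if_pos (lt_of_le_of_lt hst ht), if_pos ht]
      exact h1 (s + 1) (t + 1) (by omega) (by omega)
    · intro t ht
      dsimp only
      rw [if_pos ht]
      have := hmin (t + 1) (by omega) (by omega)
      omega
    · intro t ht
      dsimp only
      rw [if_neg (by omega)]
    · intro u v huv hv
      dsimp only
      rw [if_pos (lt_of_le_of_lt huv hv), if_pos hv]
      exact Nat.sub_le_sub_right (h1 (u + i + 1) (v + i + 1) (by omega) (by omega)) _
    · intro u hu
      dsimp only
      rw [if_pos hu]
      have := h2 (u + i + 1) (by omega)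
      omega
    · intro u hu
      dsimp only
      rw [if_neg (by omega)]
  invFun x := by
    obtain ⟨⟨b, b1, b2, b3⟩, ⟨c, c1, c2, c3⟩⟩ := x
    have hi : (i : ℕ) ≤ n := by omega
    refine ⟨⟨glue n (i : ℕ) b c, ?_, ?_, ?_⟩, ?_⟩
    · -- monotone
      intro s t hst ht
      by_cases hs0 : s = 0
      · simp only [glue, hs0, if_pos]
        exact Nat.zero_le _
      by_cases hti : t ≤ (i : ℕ)
      · (try simp only [glue]); rw [if_neg hs0, if_pos (le_trans hst hti), if_neg (by omega : ¬ t = 0), if_pos hti]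
        exact b1 (s - 1) (t - 1) (by omega) (by omega)
      · (try simp only [glue]); rw [if_neg (by omega : ¬ t = 0), if_neg hti, if_pos (by omega : t ≤ n)]
        by_cases hsi : s ≤ (i : ℕ)
        · (try simp only [glue]); rw [if_neg hs0, if_pos hsi]
          have := b2 (s - 1) (by omega)
          omega
        · (try simp only [glue]); rw [if_neg hs0, if_neg hsi, if_pos (by omega : s ≤ n)]
          have := c1 (s - i - 1) (t - i - 1) (by omega) (by omega)
          omega
    · -- subdiagonal
      intro t ht
      by_cases hs0 : t = 0
      · simp [glue, hs0]
      by_cases hti : t ≤ (i : ℕ)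
      · (try simp only [glue]); rw [if_neg hs0, if_pos hti]
        have := b2 (t - 1) (by omega)
        omega
      · (try simp only [glue]); rw [if_neg hs0, if_neg hti, if_pos (by omega : t ≤ n)]
        have := c2 (t - i - 1) (by omega)
        omega
    · -- zero beyond
      intro t ht
      try simp only [glue]
      rw [if_neg (by omega : ¬ t = 0), if_neg (by omega : ¬ t ≤ (i : ℕ)),
        if_neg (by omega : ¬ t ≤ n)]
    · -- fiber condition
      have hPd : Pd n (glue n (i : ℕ) b c) ((i : ℕ) + 1) := by
        by_cases hin : (i : ℕ) = n
        · exact Or.inl (by omega)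
        · refine Or.inr ⟨by omega, by omega, ?_⟩
          try simp only [glue]
          rw [if_neg (by omega : ¬ (i : ℕ) + 1 = 0), if_neg (by omega : ¬ (i : ℕ) + 1 ≤ (i : ℕ)),
            if_pos (by omega : (i : ℕ) + 1 ≤ n)]
          have h0 : (i : ℕ) + 1 - i - 1 = 0 := by omega
          rw [h0]
          have := c2 0 (by omega)
          omega
      have hm : ∀ t < (i : ℕ) + 1, ¬ Pd n (glue n (i : ℕ) b c) t := by
        intro t ht hPt
        rcases hPt with h | ⟨h0, hn, he⟩
        · omega
        · simp only [glue] at he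
          rw [if_neg (by omega : ¬ t = 0), if_pos (by omega : t ≤ (i : ℕ))] at he
          have := b2 (t - 1) (by omega)
          omega
      have := jj_eq n (glue n (i : ℕ) b c) _ hPd hm
      apply Fin.ext
      simp only [fj, this]
      omega
  left_inv := by
    rintro ⟨⟨a, h1, h2, h3⟩, hx⟩
    have hj : jj n a = i + 1 := by
      have h := congrArg Fin.val hx
      simp only [fj] at h
      have := jj_pos n a
      omega
    have hi : (i : ℕ) ≤ n := by omega
    apply Subtype.ext
    apply Subtype.ext
    funext t
    try simp only [glue]
    by_cases hs0 : t = 0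
    · subst hs0
      have := h2 0 (by omega)
      simp [glue]
      omega
    by_cases hti : t ≤ (i : ℕ)
    · (try simp only [glue]); rw [if_neg hs0, if_pos hti, if_pos (by omega : t - 1 < (i : ℕ))]
      congr 1
      omega
    by_cases htn : t ≤ n
    · (try simp only [glue]); rw [if_neg hs0, if_neg hti, if_pos htn, if_pos (by omega : t - i - 1 < n - (i : ℕ))]
      have hd : a ((i : ℕ) + 1) = i + 1 := by
        have hs := jj_spec n a
        rw [hj] at hs
        rcases hs with h | h
        · omega
        · omega
      have hge : (i : ℕ) + 1 ≤ a t := by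
        calc (i : ℕ) + 1 = a ((i : ℕ) + 1) := hd.symm
        _ ≤ a t := h1 _ _ (by omega) (by omega)
      have harg : t - i - 1 + i + 1 = t := by omega
      rw [harg]
      omega
    · (try simp only [glue]); rw [if_neg hs0, if_neg hti, if_neg htn, h3 t (by omega)]
  right_inv := by
    rintro ⟨⟨b, b1, b2, b3⟩, ⟨c, c1, c2, c3⟩⟩
    have hi : (i : ℕ) ≤ n := by omega
    apply Prod.ext
    · apply Subtype.ext
      funext t
      try simp only [glue]
      by_cases ht : t < (i : ℕ)
      · try simp only [glue]
        rw [if_pos ht, if_neg (by omega : ¬ t + 1 = 0), if_pos (by omega : t + 1 ≤ (i : ℕ)),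
          Nat.add_sub_cancel]
      · (try simp only [glue]); rw [if_neg ht, b3 t (by omega)]
    · apply Subtype.ext
      funext u
      try simp only [glue]
      by_cases hu : u < n - (i : ℕ)
      · (try simp only [glue]); rw [if_pos hu, if_neg (by omega : ¬ u + i + 1 = 0),
          if_neg (by omega : ¬ u + i + 1 ≤ (i : ℕ)), if_pos (by omega : u + i + 1 ≤ n)]
        have harg : u + i + 1 - i - 1 = u := by omega
        rw [harg]
        omega
      · (try simp only [glue]); rw [if_neg hu, c3 u (by omega)]

noncomputable def bigEquiv (n : ℕ) : TT (n + 1) ≃ Σ i : Fin (n + 1), TT i × TT (n - i) :=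
  (Equiv.sigmaFiberEquiv (fj n)).symm.trans (Equiv.sigmaCongrRight (fiberEquiv n))

lemma card_TT_zero : Nat.card (TT 0) = 1 := by
  have : ∀ x : TT 0, x = ⟨fun _ => 0, by constructor <;> simp⟩ := by
    rintro ⟨a, h1, h2, h3⟩
    apply Subtype.ext
    funext t
    exact h3 t (Nat.zero_le t)
  haveI : Subsingleton (TT 0) := ⟨fun a b => (this a).trans (this b).symm⟩
  haveI : Nonempty (TT 0) := ⟨⟨fun _ => 0, by constructor <;> simp⟩⟩
  exact Nat.card_unique

lemma card_TT_succ (n : ℕ) :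
    Nat.card (TT (n + 1)) = ∑ i : Fin (n + 1), Nat.card (TT i) * Nat.card (TT (n - i)) := by
  letI : ∀ m : ℕ, Fintype (TT m) := fun m => Fintype.ofFinite _
  rw [Nat.card_congr (bigEquiv n), Nat.card_eq_fintype_card, Fintype.card_sigma]
  congr 1
  funext i
  rw [Fintype.card_prod, Nat.card_eq_fintype_card, Nat.card_eq_fintype_card]

lemma card_TT_catalan (n : ℕ) : Nat.card (TT n) = catalan n := by
  induction n using Nat.strong_induction_on with
  | _ n ih =>
    match n with
    | 0 => rw [card_TT_zero, catalan_zero]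
    | m + 1 =>
      rw [card_TT_succ, catalan_succ]
      apply Finset.sum_congr rfl
      intro i _
      rw [ih i (by omega), ih (m - i) (by omega)]

theorem stmt14 (n : ℕ) :
    Nat.card {α : Fin n → Fin n // Monotone α ∧ ∀ t : Fin n, α t ≤ t}
      = Nat.choose (2 * n) n / (n + 1) := by
  rw [Nat.card_congr (equivST n), card_TT_catalan, catalan_eq_centralBinom_div,
    Nat.centralBinom]
end

section
/- The number of monotone self-maps α of the chain {0,1,...,n-1} satisfying α(0) = 0 and α(t) < t for all t = 1,...,n-1 is the (n−1)-th Catalan number, (1/n)·binomial(2n−2, n−1). -/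
/-- Monotone sequences of length `m` with `f i ≤ min i k`. -/
def bSet (m k : ℕ) := {f : Fin m → ℕ // Monotone f ∧ ∀ i : Fin m, f i ≤ min i.val k}

instance bSetFinite (m k : ℕ) : Finite (bSet m k) := by
  apply Finite.of_injective (β := Fin m → Fin (k+1))
    (fun f i => ⟨f.1 i, by have := f.2.2 i; omega⟩)
  intro f g h
  apply Subtype.ext; funext i
  have := congrFun h i
  simpa [Fin.mk.injEq] using this

noncomputable def bb (m k : ℕ) : ℕ := Nat.card (bSet m k)

lemma bb_zero (m : ℕ) : bb m 0 = 1 := by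
  have huniq : ∀ f : bSet m 0, f.1 = fun _ => 0 :=
    fun f => funext fun i => by have := f.2.2 i; omega
  haveI : Unique (bSet m 0) :=
    { default := ⟨fun _ => 0, monotone_const, fun i => by simp⟩
      uniq := fun f => Subtype.ext ((huniq f).trans rfl) }
  exact Nat.card_unique

lemma bb_stab (m k : ℕ) (h : m ≤ k + 1) : bb m (k+1) = bb m k := by
  apply Nat.card_congr
  apply Equiv.subtypeEquivRight
  intro f
  constructor <;> rintro ⟨h1, h2⟩ <;>
    exact ⟨h1, fun i => by have := h2 i; have := i.isLt; omega⟩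

lemma snoc_eval {m : ℕ} (g : Fin m → ℕ) (c : ℕ) (i : Fin (m+1)) (hi : i.val < m) :
    (Fin.snoc g c : Fin (m+1) → ℕ) i = g ⟨i.val, hi⟩ := by
  obtain ⟨i', rfl⟩ : ∃ i' : Fin m, i = i'.castSucc := ⟨⟨i.val, hi⟩, by ext; rfl⟩
  rw [Fin.snoc_castSucc]
  congr 1

lemma snoc_eval_last {m : ℕ} (g : Fin m → ℕ) (c : ℕ) (i : Fin (m+1)) (hi : i.val = m) :
    (Fin.snoc g c : Fin (m+1) → ℕ) i = c := by
  have h : i = Fin.last m := by ext; exact hi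
  rw [h, Fin.snoc_last]

lemma bb_rec (m k : ℕ) (h : k + 1 ≤ m) : bb (m+1) (k+1) = bb (m+1) k + bb m (k+1) := by
  have e : bSet (m+1) (k+1) ≃ bSet (m+1) k ⊕ bSet m (k+1) :=
  { toFun := fun f =>
      if hf : f.1 (Fin.last m) ≤ k then
        Sum.inl ⟨f.1, f.2.1, fun i => by
          have h1 := f.2.2 i
          have h2 : f.1 i ≤ f.1 (Fin.last m) := f.2.1 (Fin.le_last i)
          omega⟩
      else
        Sum.inr ⟨fun i => f.1 i.castSucc,
          fun i j hij => f.2.1 (by rw [Fin.castSucc_le_castSucc_iff]; exact hij),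
          fun i => by have := f.2.2 i.castSucc; exact this⟩
    invFun := fun s =>
      match s with
      | Sum.inl g => ⟨g.1, g.2.1, fun i => by have := g.2.2 i; omega⟩
      | Sum.inr g => ⟨Fin.snoc g.1 (k+1), by
            intro i j hij
            rw [Fin.le_def] at hij
            by_cases hj : (j : ℕ) < m
            · have hi : (i : ℕ) < m := lt_of_le_of_lt hij hj
              rw [snoc_eval _ _ _ hi, snoc_eval _ _ _ hj]
              exact g.2.1 (show (⟨i.val, hi⟩ : Fin m) ≤ ⟨j.val, hj⟩ from hij)
            · have hj' : (j : ℕ) = m := by have := j.isLt; omega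
              rw [snoc_eval_last _ _ _ hj']
              by_cases hi : (i : ℕ) < m
              · rw [snoc_eval _ _ _ hi]
                have := g.2.2 ⟨i.val, hi⟩; omega
              · have hi' : (i : ℕ) = m := by have := i.isLt; omega
                rw [snoc_eval_last _ _ _ hi'],
          by
            intro i
            by_cases hi : (i : ℕ) < m
            · rw [snoc_eval _ _ _ hi]
              have := g.2.2 ⟨i.val, hi⟩
              simpa using this
            · have hi' : (i : ℕ) = m := by have := i.isLt; omega
              rw [snoc_eval_last _ _ _ hi']
              omega⟩
    left_inv := by
      intro f
      by_cases hf : f.1 (Fin.last m) ≤ k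
      · simp only [dif_pos hf]
        exact Subtype.ext rfl
      · simp only [dif_neg hf]
        apply Subtype.ext
        funext i
        have hlast : f.1 (Fin.last m) = k + 1 := by
          have := f.2.2 (Fin.last m)
          simp only [Fin.val_last] at this
          omega
        show (Fin.snoc (fun i => f.1 (Fin.castSucc i)) (k+1) : Fin (m+1) → ℕ) i = f.1 i
        by_cases hi : (i : ℕ) < m
        · rw [snoc_eval _ _ _ hi]
          congr 1
        · have hi' : (i : ℕ) = m := by have := i.isLt; omega
          rw [snoc_eval_last _ _ _ hi']
          have h2 : i = Fin.last m := by ext; exact hi'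
          rw [h2, hlast]
    right_inv := by
      rintro (g | g)
      · have hg : g.1 (Fin.last m) ≤ k := by have := g.2.2 (Fin.last m); omega
        simp only [dif_pos hg]
        exact congrArg Sum.inl (Subtype.ext rfl)
      · have hg : ¬ ((Fin.snoc g.1 (k+1) : Fin (m+1) → ℕ) (Fin.last m) ≤ k) := by
          rw [Fin.snoc_last]; omega
        simp only [dif_neg hg]
        congr 1
        apply Subtype.ext
        funext i
        show (Fin.snoc g.1 (k+1) : Fin (m+1) → ℕ) (Fin.castSucc i) = g.1 i
        rw [Fin.snoc_castSucc] }
  rw [bb, bb, bb, Nat.card_congr e, Nat.card_sum]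

lemma bb_key : ∀ s m k, m + k = s → k ≤ m →
    bb (m+1) (k+1) + (m+k+2).choose k = (m+k+2).choose (k+1) := by
  intro s
  induction s using Nat.strong_induction_on with
  | _ s ih =>
    intro m k hs hkm
    rcases eq_or_lt_of_le hkm with heq | hlt
    · -- k = m
      obtain rfl : m = k := heq.symm
      rcases Nat.eq_zero_or_pos m with hk0 | hkpos
      · subst hk0
        have h1 : bb 1 (0+1) = bb 1 0 := bb_stab 1 0 (by omega)
        simp only [Nat.zero_add] at h1 ⊢
        rw [h1, bb_zero]
        decide
      · obtain ⟨k', rfl⟩ : ∃ k', m = k' + 1 := ⟨m - 1, by omega⟩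
        have IH := ih (k' + 1 + k') (by omega) (k'+1) k' rfl (by omega)
        have hstab : bb (k'+1+1) (k'+1+1) = bb (k'+1+1) (k'+1) :=
          bb_stab (k'+1+1) (k'+1) (by omega)
        have eA : k'+1+(k'+1)+2 = 2*k'+3+1 := by omega
        have eB : k'+1+k'+2 = 2*k'+3 := by omega
        rw [eA]
        rw [eB] at IH
        have p1 := Nat.choose_succ_succ (2*k'+3) (k'+1)
        have p2 := Nat.choose_succ_succ (2*k'+3) k'
        have psymm := Nat.choose_symm (show k'+1 ≤ 2*k'+3 by omega)
        have eE : 2*k'+3 - (k'+1) = k'+1+1 := by omega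
        rw [eE] at psymm
        simp only [Nat.succ_eq_add_one] at p1 p2
        rw [hstab]
        omega
    · -- k < m
      obtain ⟨m', rfl⟩ : ∃ m', m = m' + 1 := ⟨m - 1, by omega⟩
      have hrec := bb_rec (m'+1) k (by omega)
      rcases Nat.eq_zero_or_pos k with hk0 | hkpos
      · subst hk0
        have IH := ih m' (by omega) m' 0 (by omega) (by omega)
        simp only [Nat.add_zero, Nat.zero_add] at IH hrec ⊢
        rw [Nat.choose_zero_right, Nat.choose_one_right] at IH ⊢
        rw [hrec, bb_zero]
        omega
      · obtain ⟨k', rfl⟩ : ∃ k', k = k' + 1 := ⟨k - 1, by omega⟩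
        have IH1 := ih (m' + 1 + k') (by omega) (m'+1) k' rfl (by omega)
        have IH2 := ih (m' + (k'+1)) (by omega) m' (k'+1) rfl (by omega)
        have eA : m'+1+(k'+1)+2 = m'+k'+3+1 := by omega
        have eB : m'+1+k'+2 = m'+k'+3 := by omega
        have eC : m'+(k'+1)+2 = m'+k'+3 := by omega
        rw [eA]
        rw [eB] at IH1
        rw [eC] at IH2
        have p1 := Nat.choose_succ_succ (m'+k'+3) (k'+1)
        have p2 := Nat.choose_succ_succ (m'+k'+3) k'
        simp only [Nat.succ_eq_add_one] at p1 p2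
        rw [hrec]
        omega

theorem stmt15 (n : ℕ) (hn : 0 < n) :
    Nat.card {α : Fin n → Fin n //
        Monotone α ∧ α ⟨0, hn⟩ = ⟨0, hn⟩ ∧ ∀ t : Fin n, 1 ≤ t.val → (α t).val < t.val}
      = Nat.choose (2 * n - 2) (n - 1) / n := by
  obtain ⟨m, rfl⟩ : ∃ m, n = m + 1 := ⟨n - 1, by omega⟩
  rcases Nat.eq_zero_or_pos m with hm0 | hmpos
  · subst hm0
    have huniq : ∀ f : {α : Fin 1 → Fin 1 //
        Monotone α ∧ α ⟨0, hn⟩ = ⟨0, hn⟩ ∧ ∀ t : Fin 1, 1 ≤ t.val → (α t).val < t.val},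
        f.1 = fun _ => ⟨0, hn⟩ := fun f => funext fun i => by
          have h0 : i = ⟨0, hn⟩ := by ext; have := i.isLt; omega
          rw [h0, f.2.2.1]
    haveI : Unique {α : Fin 1 → Fin 1 //
        Monotone α ∧ α ⟨0, hn⟩ = ⟨0, hn⟩ ∧ ∀ t : Fin 1, 1 ≤ t.val → (α t).val < t.val} :=
      { default := ⟨fun _ => ⟨0, hn⟩, monotone_const, rfl, fun t ht => by
          have := t.isLt; omega⟩
        uniq := fun f => Subtype.ext ((huniq f).trans rfl) }
    rw [Nat.card_unique]
    decide
  · obtain ⟨m', rfl⟩ : ∃ m', m = m' + 1 := ⟨m - 1, by omega⟩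
    have E : {α : Fin (m'+1+1) → Fin (m'+1+1) //
        Monotone α ∧ α ⟨0, hn⟩ = ⟨0, hn⟩ ∧
          ∀ t : Fin (m'+1+1), 1 ≤ t.val → (α t).val < t.val}
        ≃ bSet (m'+1) (m'+1) :=
    { toFun := fun α => ⟨fun i => (α.1 i.succ).val,
        by
          intro i j hij
          exact α.2.1 (by rw [Fin.succ_le_succ_iff]; exact hij)
        ,
        by
          intro i
          show (α.1 i.succ).val ≤ min i.val (m'+1)
          have h1 := α.2.2.2 i.succ (by simp)
          have h2 := i.isLt
          simp only [Fin.val_succ] at h1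
          omega⟩
      invFun := fun f => ⟨fun t =>
          if ht : (t : ℕ) = 0 then ⟨0, hn⟩
          else ⟨f.1 ⟨t.val - 1, by have := t.isLt; omega⟩, by
            have := f.2.2 ⟨t.val - 1, by have := t.isLt; omega⟩
            have ht2 := t.isLt
            simp only at this
            omega⟩,
        by
          intro s t hst
          rw [Fin.le_def] at hst
          by_cases hs : (s : ℕ) = 0
          · simp only [dif_pos hs, Fin.le_def]
            omega
          · have ht : ¬ ((t : ℕ) = 0) := by omega
            simp only [dif_neg hs, dif_neg ht, Fin.le_def]
            exact f.2.1 (show (⟨s.val - 1, by have := s.isLt; omega⟩ : Fin (m'+1)) ≤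
              ⟨t.val - 1, by have := t.isLt; omega⟩ by rw [Fin.le_def]; simp; omega),
        by
          refine ⟨by simp, ?_⟩
          intro t ht
          have ht0 : ¬ ((t : ℕ) = 0) := by omega
          simp only [dif_neg ht0]
          have := f.2.2 ⟨t.val - 1, by have := t.isLt; omega⟩
          simp only at this
          omega⟩
      left_inv := by
        intro α
        apply Subtype.ext
        funext t
        by_cases ht : (t : ℕ) = 0
        · simp only [dif_pos ht]
          have h0 : t = ⟨0, hn⟩ := by ext; exact ht
          rw [h0, α.2.2.1]
        · simp only [dif_neg ht]
          have hsucc : (⟨t.val - 1, by have := t.isLt; omega⟩ : Fin (m'+1)).succ = t := by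
            ext; simp [Fin.val_succ]; omega
          apply Fin.ext
          simp only [hsucc]
      right_inv := by
        intro f
        apply Subtype.ext
        funext i
        have hne : ¬ ((i.succ : ℕ) = 0) := by simp
        simp only [dif_neg hne]
        congr 1 }
    rw [Nat.card_congr E]
    have key : bb (m'+1) (m'+1) + (2*(m'+1+1)-2).choose m'
        = (2*(m'+1+1)-2).choose (m'+1+1-1) := by
      have k0 := bb_key (m' + m') m' m' rfl le_rfl
      have e1 : m' + m' + 2 = 2 * (m'+1+1) - 2 := by omega
      have e2 : m' + 1 + 1 - 1 = m' + 1 := by omega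
      rw [e1] at k0
      rw [e2]
      exact k0
    have hb : Nat.card (bSet (m'+1) (m'+1)) = bb (m'+1) (m'+1) := rfl
    rw [hb]
    set A := (2 * (m'+1+1) - 2).choose (m'+1+1-1) with hA
    set B := (2 * (m'+1+1) - 2).choose m' with hB
    have hcsr : A * (m' + 1) = B * (m' + 2) := by
      have h := Nat.choose_succ_right_eq (2 * (m'+1+1) - 2) m'
      have h2 : 2 * (m'+1+1) - 2 - m' = m' + 2 := by omega
      rw [h2] at h
      have h1 : m' + 1 = m'+1+1-1 := by omega
      rw [h1] at h
      exact h
    have hmul : bb (m'+1) (m'+1) * (m' + 2) = A := by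
      have h3 : (bb (m'+1) (m'+1) + B) * (m' + 2) = A * (m' + 2) := by rw [key]
      have h4 : A * (m' + 2) = A * (m' + 1) + A := by ring
      have h5 : (bb (m'+1) (m'+1) + B) * (m'+2) = bb (m'+1) (m'+1) * (m'+2) + B * (m'+2) := by
        ring
      omega
    have hdiv : A / (m'+1+1) = bb (m'+1) (m'+1) := by
      apply Nat.div_eq_of_eq_mul_left (by omega)
      rw [← hmul]
    rw [hdiv]
end
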